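/- Let ℓ,n be positive integers and let r_i≥0 (1≤i≤ℓ), c_j≥0 (1≤j≤n), m_{ij}≥0 (1≤i≤ℓ, 1≤j≤n) be integers such that ∑_{1≤i≤ℓ} r_i = ∑_{1≤j≤n} c_j. Then there exists an ℓ×n integer matrix B=(b_{ij}) with row sums r_1,…,r_ℓ and column sums c_1,…,c_n such that 0≤b_{ij}≤m_{ij} for all i,j, if and only if for all X⊆{1,…,ℓ} and Y⊆{1,…,n}: ∑_{i∈X, j∈Y} m_{ij} ≥ ∑_{i∈X} r_i − ∑_{j∉Y} c_j. -/

import Mathlib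

private lemma sum_sub_one {α : Type*} [DecidableEq α] (s : Finset α) (f g : α → ℕ) (a : α)
    (ha : 1 ≤ f a) (hg : ∀ x, g x = if x = a then f a - 1 else f x) :
    ∑ x ∈ s, g x + (if a ∈ s then 1 else 0) = ∑ x ∈ s, f x := by
  by_cases h : a ∈ s
  · rw [if_pos h, ← Finset.insert_erase h, Finset.sum_insert (Finset.notMem_erase a s),
      Finset.sum_insert (Finset.notMem_erase a s)]
    have h1 : ∑ x ∈ s.erase a, g x = ∑ x ∈ s.erase a, f x :=
      Finset.sum_congr rfl fun x hx => by rw [hg x, if_neg (Finset.ne_of_mem_erase hx)]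
    rw [h1, hg a, if_pos rfl]
    omega
  · rw [if_neg h, add_zero]
    refine Finset.sum_congr rfl fun x hx => ?_
    rw [hg x, if_neg]
    rintro rfl; exact h hx

private lemma expand10 {ℓ n : ℕ} (m : Fin ℓ → Fin n → ℕ) (X : Finset (Fin ℓ)) (Y : Finset (Fin n)) :
    ∑ i ∈ X, ∑ j ∈ Y, m i j = ∑ i, ∑ j, if i ∈ X ∧ j ∈ Y then m i j else 0 := by
  calc ∑ i ∈ X, ∑ j ∈ Y, m i j
      = ∑ i ∈ X, ∑ j, (if j ∈ Y then m i j else 0) := by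
        refine Finset.sum_congr rfl fun i _ => ?_
        rw [Finset.sum_ite_mem, Finset.univ_inter]
    _ = ∑ i, if i ∈ X then (∑ j, if j ∈ Y then m i j else 0) else 0 := by
        rw [Finset.sum_ite_mem, Finset.univ_inter]
    _ = ∑ i, ∑ j, if i ∈ X ∧ j ∈ Y then m i j else 0 := by
        refine Finset.sum_congr rfl fun i _ => ?_
        by_cases hi : i ∈ X <;> simp [hi]

private lemma submod10 {ℓ n : ℕ} (m : Fin ℓ → Fin n → ℕ) (X1 X2 : Finset (Fin ℓ))
    (Y1 Y2 : Finset (Fin n)) :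
    ∑ i ∈ X1 ∪ X2, ∑ j ∈ Y1 ∩ Y2, m i j + ∑ i ∈ X1 ∩ X2, ∑ j ∈ Y1 ∪ Y2, m i j
      ≤ ∑ i ∈ X1, ∑ j ∈ Y1, m i j + ∑ i ∈ X2, ∑ j ∈ Y2, m i j := by
  rw [expand10 m (X1 ∪ X2) (Y1 ∩ Y2), expand10 m (X1 ∩ X2) (Y1 ∪ Y2),
    expand10 m X1 Y1, expand10 m X2 Y2]
  rw [← Finset.sum_add_distrib, ← Finset.sum_add_distrib]
  refine Finset.sum_le_sum fun i _ => ?_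
  rw [← Finset.sum_add_distrib, ← Finset.sum_add_distrib]
  refine Finset.sum_le_sum fun j _ => ?_
  by_cases h1 : i ∈ X1 <;> by_cases h2 : i ∈ X2 <;> by_cases h3 : j ∈ Y1 <;>
    by_cases h4 : j ∈ Y2 <;> simp [h1, h2, h3, h4]

private lemma key10 {ℓ n : ℕ} (N : ℕ) :
    ∀ (r : Fin ℓ → ℕ) (c : Fin n → ℕ) (m : Fin ℓ → Fin n → ℕ),
    ∑ i, r i ≤ N → ∑ i, r i = ∑ j, c j →
    (∀ (X : Finset (Fin ℓ)) (Y : Finset (Fin n)),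
        ∑ i ∈ X, r i ≤ ∑ i ∈ X, ∑ j ∈ Y, m i j + ∑ j ∈ Yᶜ, c j) →
    ∃ B : Fin ℓ → Fin n → ℕ,
        (∀ i j, B i j ≤ m i j) ∧ (∀ i, ∑ j, B i j = r i) ∧ (∀ j, ∑ i, B i j = c j) := by
  induction N with
  | zero =>
    intro r c m hN hsum _
    refine ⟨fun _ _ => 0, fun _ _ => Nat.zero_le _, fun i => ?_, fun j => ?_⟩
    · simp only [Finset.sum_const_zero]
      have := (Finset.sum_eq_zero_iff.mp (Nat.le_zero.mp hN)) i (Finset.mem_univ i)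
      omega
    · simp only [Finset.sum_const_zero]
      have h0 : ∑ j, c j = 0 := by omega
      exact ((Finset.sum_eq_zero_iff.mp h0) j (Finset.mem_univ j)).symm
  | succ N ih =>
    intro r c m hN hsum H
    by_cases h0 : ∑ i, r i = 0
    · refine ⟨fun _ _ => 0, fun _ _ => Nat.zero_le _, fun i => ?_, fun j => ?_⟩
      · simp only [Finset.sum_const_zero]
        exact ((Finset.sum_eq_zero_iff.mp h0) i (Finset.mem_univ i)).symm
      · simp only [Finset.sum_const_zero]
        have h1 : ∑ j, c j = 0 := by omega
        exact ((Finset.sum_eq_zero_iff.mp h1) j (Finset.mem_univ j)).symm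
    -- choose a row with positive row sum
    obtain ⟨i, hri⟩ : ∃ i, r i ≠ 0 := by
      by_contra hall
      push_neg at hall
      exact h0 (Finset.sum_eq_zero fun i _ => hall i)
    -- find a "good" column j
    obtain ⟨j, hmij, hgood⟩ : ∃ j, m i j ≠ 0 ∧ ∀ (X : Finset (Fin ℓ)) (Y : Finset (Fin n)),
        i ∉ X → j ∉ Y → ∑ i' ∈ X, r i' + 1 ≤ ∑ i' ∈ X, ∑ j' ∈ Y, m i' j' + ∑ j' ∈ Yᶜ, c j' := by
      by_contra hbad
      push_neg at hbad
      -- all columns with m i j ≠ 0 have a tight pair avoiding i and j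
      have hbad' : ∀ j, m i j ≠ 0 → ∃ (X : Finset (Fin ℓ)) (Y : Finset (Fin n)),
          i ∉ X ∧ j ∉ Y ∧ ∑ i' ∈ X, ∑ j' ∈ Y, m i' j' + ∑ j' ∈ Yᶜ, c j' ≤ ∑ i' ∈ X, r i' := by
        intro j hj
        obtain ⟨X, Y, hX, hY, hlt⟩ := hbad j hj
        exact ⟨X, Y, hX, hY, by omega⟩
      -- combine tight pairs over any finset of columns
      have hcomb : ∀ S : Finset (Fin n), ∃ (X : Finset (Fin ℓ)) (Y : Finset (Fin n)),
          i ∉ X ∧ (∀ j ∈ S, m i j ≠ 0 → j ∉ Y) ∧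
          ∑ i' ∈ X, ∑ j' ∈ Y, m i' j' + ∑ j' ∈ Yᶜ, c j' ≤ ∑ i' ∈ X, r i' := by
        intro S
        induction S using Finset.induction with
        | empty =>
          refine ⟨∅, Finset.univ, Finset.notMem_empty i, fun j hj => absurd hj (Finset.notMem_empty j), ?_⟩
          simp
        | insert j S' hnotmem ihS =>
          obtain ⟨X1, Y1, hX1, hY1, ht1⟩ := ihS
          by_cases hj : m i j = 0
          · refine ⟨X1, Y1, hX1, fun j' hj' hm' => ?_, ht1⟩
            rcases Finset.mem_insert.mp hj' with rfl | h
            · exact absurd hj hm'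
            · exact hY1 j' h hm'
          · obtain ⟨X2, Y2, hX2, hY2, ht2⟩ := hbad' j hj
            refine ⟨X1 ∪ X2, Y1 ∩ Y2, fun hmem => ?_, fun j' hj' hm' hmem => ?_, ?_⟩
            · rcases Finset.mem_union.mp hmem with h | h
              exacts [hX1 h, hX2 h]
            · rcases Finset.mem_insert.mp hj' with rfl | h
              · exact hY2 (Finset.mem_inter.mp hmem).2
              · exact hY1 j' h hm' (Finset.mem_inter.mp hmem).1
            · have hsub := submod10 m X1 X2 Y1 Y2
              have hrmod := Finset.sum_union_inter (s₁ := X1) (s₂ := X2) (f := r)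
              have hcmod : ∑ j' ∈ (Y1 ∩ Y2)ᶜ, c j' + ∑ j' ∈ (Y1 ∪ Y2)ᶜ, c j'
                  = ∑ j' ∈ Y1ᶜ, c j' + ∑ j' ∈ Y2ᶜ, c j' := by
                rw [Finset.compl_inter, Finset.compl_union]
                exact Finset.sum_union_inter
              have hH := H (X1 ∩ X2) (Y1 ∪ Y2)
              omega
      obtain ⟨X, Y, hX, hY, ht⟩ := hcomb Finset.univ
      have hY' : ∀ j' ∈ Y, m i j' = 0 := by
        intro j' hj'
        by_contra hne
        exact hY j' (Finset.mem_univ j') hne hj'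
      have hH := H (insert i X) Y
      rw [Finset.sum_insert hX, Finset.sum_insert hX] at hH
      rw [Finset.sum_eq_zero hY'] at hH
      omega
    -- facts
    have hcj : 1 ≤ c j := by
      have := hgood ∅ (Finset.univ.erase j) (Finset.notMem_empty i) (Finset.notMem_erase j _)
      simpa [Finset.compl_erase] using this
    have hri' : 1 ≤ r i := by omega
    have hmij' : 1 ≤ m i j := by omega
    -- decremented data
    set r' : Fin ℓ → ℕ := fun i' => if i' = i then r i - 1 else r i' with hr'def
    set c' : Fin n → ℕ := fun j' => if j' = j then c j - 1 else c j' with hc'def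
    set m' : Fin ℓ → Fin n → ℕ := fun i' j' => if i' = i ∧ j' = j then m i j - 1 else m i' j'
      with hm'def
    have hr' : ∀ X : Finset (Fin ℓ), ∑ i' ∈ X, r' i' + (if i ∈ X then 1 else 0) = ∑ i' ∈ X, r i' :=
      fun X => sum_sub_one X r r' i hri' (fun x => rfl)
    have hc' : ∀ Y : Finset (Fin n), ∑ j' ∈ Y, c' j' + (if j ∈ Y then 1 else 0) = ∑ j' ∈ Y, c j' :=
      fun Y => sum_sub_one Y c c' j hcj (fun x => rfl)
    have hm' : ∀ (X : Finset (Fin ℓ)) (Y : Finset (Fin n)),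
        ∑ i' ∈ X, ∑ j' ∈ Y, m' i' j' + (if i ∈ X ∧ j ∈ Y then 1 else 0)
          = ∑ i' ∈ X, ∑ j' ∈ Y, m i' j' := by
      intro X Y
      rw [← Finset.sum_product' (f := fun i' j' => m' i' j'),
        ← Finset.sum_product' (f := fun i' j' => m i' j')]
      have h := sum_sub_one (X ×ˢ Y) (fun p => m p.1 p.2) (fun p => m' p.1 p.2)
        (i, j) hmij' (fun p => by simp only [hm'def, Prod.ext_iff])
      simpa only [Finset.mem_product] using h
    have hsum' : ∑ i', r' i' = ∑ j', c' j' := by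
      have h1 := hr' Finset.univ
      have h2 := hc' Finset.univ
      simp only [Finset.mem_univ, if_pos] at h1 h2
      omega
    have hN' : ∑ i', r' i' ≤ N := by
      have h1 := hr' Finset.univ
      simp only [Finset.mem_univ, if_pos] at h1
      omega
    have H' : ∀ (X : Finset (Fin ℓ)) (Y : Finset (Fin n)),
        ∑ i' ∈ X, r' i' ≤ ∑ i' ∈ X, ∑ j' ∈ Y, m' i' j' + ∑ j' ∈ Yᶜ, c' j' := by
      intro X Y
      have h1 := hr' X
      have h2 := hc' Yᶜ
      have h3 := hm' X Y
      by_cases hiX : i ∈ X <;> by_cases hjY : j ∈ Y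
      · rw [if_pos hiX] at h1
        rw [if_neg (fun hc => (Finset.mem_compl.mp hc) hjY)] at h2
        rw [if_pos ⟨hiX, hjY⟩] at h3
        have := H X Y; omega
      · rw [if_pos hiX] at h1
        rw [if_pos (Finset.mem_compl.mpr hjY)] at h2
        rw [if_neg (fun hc => hjY hc.2)] at h3
        have := H X Y; omega
      · rw [if_neg hiX] at h1
        rw [if_neg (fun hc => (Finset.mem_compl.mp hc) hjY)] at h2
        rw [if_neg (fun hc => hiX hc.1)] at h3
        have := H X Y; omega
      · rw [if_neg hiX] at h1
        rw [if_pos (Finset.mem_compl.mpr hjY)] at h2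
        rw [if_neg (fun hc => hiX hc.1)] at h3
        have := hgood X Y hiX hjY; omega
    obtain ⟨B', hB'le, hB'row, hB'col⟩ := ih r' c' m' hN' hsum' H'
    refine ⟨fun i' j' => if i' = i ∧ j' = j then B' i' j' + 1 else B' i' j', ?_, ?_, ?_⟩
    · intro i' j'
      by_cases h : i' = i ∧ j' = j
      · obtain ⟨rfl, rfl⟩ := h
        have := hB'le i' j'
        simp only [hm'def, and_self, if_true] at this ⊢
        omega
      · have := hB'le i' j'
        simp only [hm'def, h, if_false] at this ⊢
        exact this
    · intro i'
      by_cases h : i' = i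
      · subst h
        have : ∀ j', (if i' = i' ∧ j' = j then B' i' j' + 1 else B' i' j')
            = B' i' j' + (if j' = j then 1 else 0) := by
          intro j'; by_cases hj' : j' = j <;> simp [hj']
        rw [Finset.sum_congr rfl fun j' _ => this j', Finset.sum_add_distrib,
          Finset.sum_ite_eq' Finset.univ j (fun _ => 1), if_pos (Finset.mem_univ j), hB'row i']
        simp only [hr'def, if_pos rfl]
        omega
      · have : ∀ j', (if i' = i ∧ j' = j then B' i' j' + 1 else B' i' j') = B' i' j' := by
          intro j'; simp [h]
        rw [Finset.sum_congr rfl fun j' _ => this j', hB'row i']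
        simp [hr'def, h]
    · intro j'
      by_cases h : j' = j
      · subst h
        have : ∀ i', (if i' = i ∧ j' = j' then B' i' j' + 1 else B' i' j')
            = B' i' j' + (if i' = i then 1 else 0) := by
          intro i'; by_cases hi' : i' = i <;> simp [hi']
        rw [Finset.sum_congr rfl fun i' _ => this i', Finset.sum_add_distrib,
          Finset.sum_ite_eq' Finset.univ i (fun _ => 1), if_pos (Finset.mem_univ i), hB'col j']
        simp only [hc'def, if_pos rfl]
        omega
      · have : ∀ i', (if i' = i ∧ j' = j then B' i' j' + 1 else B' i' j') = B' i' j' := by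
          intro i'; simp [h]
        rw [Finset.sum_congr rfl fun i' _ => this i', hB'col j']
        simp [hc'def, h]

/-- **Mirsky's theorem** (corollary for exact row and column sums):
existence of a nonnegative integer matrix with prescribed row sums `r`,
column sums `c`, and entrywise upper bounds `m`. -/
theorem stmt_10 (ℓ n : ℕ) (hℓ : 0 < ℓ) (hn : 0 < n)
    (r : Fin ℓ → ℕ) (c : Fin n → ℕ) (m : Fin ℓ → Fin n → ℕ)
    (hsum : ∑ i, r i = ∑ j, c j) :
    (∃ B : Fin ℓ → Fin n → ℕ,
        (∀ i j, B i j ≤ m i j) ∧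
        (∀ i, ∑ j, B i j = r i) ∧
        (∀ j, ∑ i, B i j = c j)) ↔
      ∀ (X : Finset (Fin ℓ)) (Y : Finset (Fin n)),
        (∑ i ∈ X, ∑ j ∈ Y, (m i j : ℤ)) ≥
          (∑ i ∈ X, (r i : ℤ)) - ∑ j ∈ Yᶜ, (c j : ℤ) := by
  constructor
  · rintro ⟨B, hBle, hrow, hcol⟩ X Y
    have hkey : ∑ i ∈ X, r i ≤ ∑ i ∈ X, ∑ j ∈ Y, m i j + ∑ j ∈ Yᶜ, c j := by
      have h1 : ∑ i ∈ X, r i = ∑ i ∈ X, ∑ j ∈ Y, B i j + ∑ i ∈ X, ∑ j ∈ Yᶜ, B i j := by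
        rw [← Finset.sum_add_distrib]
        refine Finset.sum_congr rfl fun i _ => ?_
        rw [Finset.sum_add_sum_compl, hrow i]
      have h2 : ∑ i ∈ X, ∑ j ∈ Y, B i j ≤ ∑ i ∈ X, ∑ j ∈ Y, m i j :=
        Finset.sum_le_sum fun i _ => Finset.sum_le_sum fun j _ => hBle i j
      have h3 : ∑ i ∈ X, ∑ j ∈ Yᶜ, B i j ≤ ∑ j ∈ Yᶜ, c j := by
        rw [Finset.sum_comm]
        refine Finset.sum_le_sum fun j _ => ?_
        rw [← hcol j]
        exact Finset.sum_le_sum_of_subset (Finset.subset_univ X)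
      omega
    rw [ge_iff_le, sub_le_iff_le_add]
    exact_mod_cast hkey
  · intro hcond
    apply key10 (∑ i, r i) r c m le_rfl hsum
    intro X Y
    have h := hcond X Y
    rw [ge_iff_le, sub_le_iff_le_add] at h
    exact_mod_cast h
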